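/- For every position i with 0 ≤ i < n−1 such that ISA[i] ≥ 1 and ISA[i+1] ≥ 1, it holds that lcp(i+1, Φ(i+1)) ≥ lcp(i, Φ(i)) − 1, where Φ(p) = SA[ISA[p]−1] denotes the starting position of the immediate lexicographic predecessor suffix of S_p. -/

import Mathlib

/-- The suffix `S_i = T[i..n)` of the text `T` of length `n`, as a list. -/
def suff {α : Type*} (T : ℕ → α) (n i : ℕ) : List α :=
  (List.range (n - i)).map (fun t => T (i + t))

/-- `S_i` has type B: there is a `k ≥ i` with `T[k] < T[k+1]` and
`T[m] = T[m+1]` for all `i ≤ m < k`. -/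
def TypeB {α : Type*} [LinearOrder α] (T : ℕ → α) (n i : ℕ) : Prop :=
  ∃ k, i ≤ k ∧ k + 1 < n ∧ T k < T (k + 1) ∧ ∀ m, i ≤ m → m < k → T m = T (m + 1)

/-- `S_i` has type A: either there is a `k ≥ i` with `T[k] > T[k+1]` and
`T[m] = T[m+1]` for all `i ≤ m < k`, or all characters from position `i`
to the end are equal (the type propagates from `S_{n-1}`). -/
def TypeA {α : Type*} [LinearOrder α] (T : ℕ → α) (n i : ℕ) : Prop :=
  (∃ k, i ≤ k ∧ k + 1 < n ∧ T (k + 1) < T k ∧ ∀ m, i ≤ m → m < k → T m = T (m + 1))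
  ∨ (∀ m, i ≤ m → m + 1 < n → T m = T (m + 1))

/-- `S_i` is a B*-suffix: `S_i` has type B and `S_{i+1}` has type A. -/
def TypeBStar {α : Type*} [LinearOrder α] (T : ℕ → α) (n i : ℕ) : Prop :=
  TypeB T n i ∧ TypeA T n (i + 1)

/-- `lcp T n i j` is the largest `s ≥ 0` with `i + s ≤ n`, `j + s ≤ n` and
`T[i+t] = T[j+t]` for all `t < s`. -/
noncomputable def lcp {α : Type*} (T : ℕ → α) (n i j : ℕ) : ℕ :=
  sSup {s | i + s ≤ n ∧ j + s ≤ n ∧ ∀ t, t < s → T (i + t) = T (j + t)}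

lemma suff_length {α : Type*} (T : ℕ → α) (n i : ℕ) : (suff T n i).length = n - i := by
  simp [suff]

lemma suff_getElem {α : Type*} (T : ℕ → α) (n i t : ℕ) (h : t < (suff T n i).length) :
    (suff T n i)[t] = T (i + t) := by
  simp [suff]

lemma suff_cons {α : Type*} (T : ℕ → α) (n i : ℕ) (h : i < n) :
    suff T n i = T i :: suff T n (i + 1) := by
  have hni : n - i = (n - (i + 1)) + 1 := by omega
  rw [suff, hni, List.range_succ_eq_map, List.map_cons, List.map_map]
  simp only [Nat.add_zero, suff]
  congr 1
  apply List.map_congr_left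
  intro t _
  simp only [Function.comp_apply]
  congr 1
  omega

lemma lex_sandwich {α : Type*} [LinearOrder α] :
    ∀ (s : ℕ) (l₁ l₂ l₃ : List α),
    (l₁ = l₂ ∨ List.Lex (· < ·) l₁ l₂) → List.Lex (· < ·) l₂ l₃ →
    s ≤ l₁.length → s ≤ l₃.length → l₁.take s = l₃.take s →
    s ≤ l₂.length ∧ l₂.take s = l₁.take s
  | 0, _, _, _, _, _, _, _, _ => ⟨Nat.zero_le _, by simp⟩
  | s+1, l₁, l₂, l₃, h12, h23, h1, h3, hpre => by
    rcases h12 with rfl | h12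
    · exact ⟨h1, rfl⟩
    match l₁, l₂, l₃ with
    | [], _, _ => simp at h1
    | _, _, [] => simp at h3
    | a :: t₁, [], _ => exact absurd h12 List.not_lex_nil
    | a :: t₁, b :: t₂, c :: t₃ =>
      simp only [List.take_succ_cons, List.cons.injEq] at hpre
      obtain ⟨rfl, hpre⟩ := hpre
      cases h12 with
      | rel hab =>
        cases h23 with
        | rel hbc => exact absurd (hab.trans hbc) (lt_irrefl a)
        | cons h => exact absurd hab (lt_irrefl a)
      | cons h12' =>
        cases h23 with
        | rel hbc => exact absurd hbc (lt_irrefl a)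
        | cons h23' =>
          obtain ⟨hs, heq⟩ := lex_sandwich s t₁ t₂ t₃ (Or.inr h12') h23'
            (Nat.le_of_succ_le_succ (by simpa using h1))
            (Nat.le_of_succ_le_succ (by simpa using h3)) hpre
          exact ⟨by simpa using Nat.succ_le_succ hs, by simp [heq]⟩

lemma take_eq_of_pointwise {α : Type*} (T : ℕ → α) (n i j s : ℕ)
    (hi : i + s ≤ n) (hj : j + s ≤ n) (h : ∀ t, t < s → T (i + t) = T (j + t)) :
    (suff T n i).take s = (suff T n j).take s := by
  apply List.ext_getElem
  · simp [suff_length]; omega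
  · intro t h1 h2
    have ht : t < s := by simp [suff_length] at h1; omega
    rw [List.getElem_take, List.getElem_take, suff_getElem, suff_getElem]
    exact h t ht

lemma pointwise_of_take_eq {α : Type*} (T : ℕ → α) (n i j s : ℕ)
    (hi : i + s ≤ n) (hj : j + s ≤ n)
    (h : (suff T n i).take s = (suff T n j).take s) :
    ∀ t, t < s → T (i + t) = T (j + t) := by
  intro t ht
  have h1 : t < ((suff T n i).take s).length := by simp [suff_length]; omega
  have h2 : t < ((suff T n j).take s).length := by simp [suff_length]; omega
  have heq : ((suff T n i).take s)[t]'h1 = ((suff T n j).take s)[t]'h2 := by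
    simp only [h]
  rw [List.getElem_take, List.getElem_take, suff_getElem, suff_getElem] at heq
  exact heq

/-- Sparse Φ-algorithm inequality: `lcp(i+1, Φ(i+1)) ≥ lcp(i, Φ(i)) - 1`,
where `Φ(p) = SA[ISA[p] - 1]` is the immediate lexicographic predecessor. -/
theorem stmt_11 {α : Type*} [LinearOrder α] (T : ℕ → α) (n : ℕ) (hn : 1 ≤ n)
    (SA ISA : ℕ → ℕ)
    (hSAlt : ∀ u, u < n → SA u < n)
    (hSAsorted : ∀ u v, u < v → v < n →
      List.Lex (· < ·) (suff T n (SA u)) (suff T n (SA v)))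
    (hSAsurj : ∀ p, p < n → ∃ u, u < n ∧ SA u = p)
    (hISA : ∀ p, p < n → ISA p < n ∧ SA (ISA p) = p)
    (i : ℕ) (hi : i < n - 1) (hISAi : 1 ≤ ISA i) (hISAi1 : 1 ≤ ISA (i + 1)) :
    lcp T n i (SA (ISA i - 1)) - 1 ≤ lcp T n (i + 1) (SA (ISA (i + 1) - 1)) := by
  have hin : i < n := by omega
  have hi1n : i + 1 < n := by omega
  obtain ⟨hrin, hri⟩ := hISA i hin
  obtain ⟨hrn, hr⟩ := hISA (i + 1) hi1n
  set j := SA (ISA i - 1) with hjdef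
  set b := SA (ISA (i + 1) - 1) with hbdef
  have hjn : j < n := hSAlt _ (by omega)
  have hbn : b < n := hSAlt _ (by omega)
  set L := lcp T n i j with hLdef
  -- boundedness of lcp sets
  have hbdd : ∀ x y : ℕ, BddAbove {s | x + s ≤ n ∧ y + s ≤ n ∧
      ∀ t, t < s → T (x + t) = T (y + t)} := by
    intro x y
    exact ⟨n, fun s hs => by have := hs.1; omega⟩
  have hne : ({s | i + s ≤ n ∧ j + s ≤ n ∧
      ∀ t, t < s → T (i + t) = T (j + t)} : Set ℕ).Nonempty :=
    ⟨0, by omega, by omega, fun t ht => by omega⟩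
  have hLmem : L ∈ {s | i + s ≤ n ∧ j + s ≤ n ∧
      ∀ t, t < s → T (i + t) = T (j + t)} := Nat.sSup_mem hne (hbdd i j)
  obtain ⟨hL1, hL2, hL3⟩ := hLmem
  by_cases hLle : L ≤ 1
  · have : L - 1 = 0 := by omega
    rw [this]
    exact Nat.zero_le _
  push_neg at hLle
  have hj1n : j + 1 < n := by omega
  have hTij : T i = T j := by
    have := hL3 0 (by omega)
    simpa using this
  -- S_j < S_i lexicographically
  have hji : List.Lex (· < ·) (suff T n j) (suff T n i) := by
    have := hSAsorted (ISA i - 1) (ISA i) (by omega) hrin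
    rwa [hri] at this
  -- strip the equal head to get S_{j+1} < S_{i+1}
  rw [suff_cons T n j hjn, suff_cons T n i hin, hTij] at hji
  have hji1 : List.Lex (· < ·) (suff T n (j + 1)) (suff T n (i + 1)) := by
    cases hji with
    | rel h => exact absurd h (lt_irrefl _)
    | cons h => exact h
  obtain ⟨hqn, hq⟩ := hISA (j + 1) hj1n
  have hne1 : j + 1 ≠ i + 1 := by
    intro he
    rw [he] at hji1
    exact asymm hji1 hji1
  have hqr : ISA (j + 1) < ISA (i + 1) := by
    by_contra hcon
    push_neg at hcon
    rcases Nat.lt_or_ge (ISA (i + 1)) (ISA (j + 1)) with h | h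
    · have := hSAsorted (ISA (i + 1)) (ISA (j + 1)) h hqn
      rw [hr, hq] at this
      exact asymm hji1 this
    · exact hne1 (by rw [← hq, ← hr]; congr 1; omega)
  -- S_b < S_{i+1}
  have hbi : List.Lex (· < ·) (suff T n b) (suff T n (i + 1)) := by
    have := hSAsorted (ISA (i + 1) - 1) (ISA (i + 1)) (by omega) hrn
    rwa [hr] at this
  -- S_{j+1} ≤ S_b
  have h12 : suff T n (j + 1) = suff T n b ∨
      List.Lex (· < ·) (suff T n (j + 1)) (suff T n b) := by
    rcases eq_or_lt_of_le (Nat.le_sub_one_of_lt hqr) with h | h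
    · left
      rw [hbdef, ← h, hq]
    · right
      have := hSAsorted (ISA (j + 1)) (ISA (i + 1) - 1) h (by omega)
      rwa [hq] at this
  -- shared prefix of length L - 1
  have hpre : (suff T n (j + 1)).take (L - 1) = (suff T n (i + 1)).take (L - 1) := by
    apply take_eq_of_pointwise T n (j + 1) (i + 1) (L - 1) (by omega) (by omega)
    intro t ht
    have h := hL3 (t + 1) (by omega)
    have e1 : i + (t + 1) = i + 1 + t := by omega
    have e2 : j + (t + 1) = j + 1 + t := by omega
    rw [e1, e2] at h
    exact h.symm
  obtain ⟨hlen, hteq⟩ := lex_sandwich (L - 1) (suff T n (j + 1)) (suff T n b)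
    (suff T n (i + 1)) h12 hbi
    (by rw [suff_length]; omega) (by rw [suff_length]; omega) hpre
  rw [suff_length] at hlen
  have hbL : b + (L - 1) ≤ n := by omega
  have hmem : (L - 1) ∈ {s | (i + 1) + s ≤ n ∧ b + s ≤ n ∧
      ∀ t, t < s → T ((i + 1) + t) = T (b + t)} := by
    refine ⟨by omega, hbL, ?_⟩
    intro t ht
    exact (pointwise_of_take_eq T n b (i + 1) (L - 1) hbL (by omega)
      (hteq.trans hpre) t ht).symm
  exact le_csSup (hbdd (i + 1) b) hmem
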